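/- arXiv:0712.1018 — 2 statements merged into one kernel-verified Lean document; each statement's English description precedes it below -/
import Mathlib

section
/- For every n ≥ 1 and every prime p there exist infinitely many polynomials f ∈ Z_p[x₁,…,x_n], homogeneous and nonconstant with f(0)=0, that are strongly elliptic modulo p. -/
noncomputable section

namespace PadicHeat

variable (p : ℕ) [Fact p.Prime]

open MvPolynomial Finset

def eS (p n : ℕ) (S : Finset (Fin n)) : ℕ := (p - 1) * (n.factorial / S.card)

def FF (p n : ℕ) (R : Type*) [CommRing R] : MvPolynomial (Fin n) R :=
  ∑ S ∈ Finset.univ.powerset.filter Finset.Nonempty,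
    (-1) ^ (S.card + 1) * ∏ i ∈ S, X i ^ eS p n S

lemma card_le_factorial {n : ℕ} (S : Finset (Fin n)) : S.card ≤ n.factorial :=
  le_trans (le_trans (card_le_card (subset_univ S)) (by simp)) (Nat.self_le_factorial n)

lemma eS_ne_zero {p n : ℕ} [Fact p.Prime] {S : Finset (Fin n)} (hS : S.Nonempty) :
    eS p n S ≠ 0 := by
  have hp : 2 ≤ p := (Fact.out : p.Prime).two_le
  have h2 : 0 < n.factorial / S.card :=
    Nat.div_pos (le_trans (card_le_card (subset_univ S)) (by simpa using card_le_factorial univ))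
      (card_pos.mpr hS)
  have h2' : 0 < n.factorial / S.card := Nat.div_pos (card_le_factorial S) (card_pos.mpr hS)
  simp only [eS]; exact Nat.mul_ne_zero (by omega) h2'.ne'

lemma card_dvd_factorial {n : ℕ} {S : Finset (Fin n)} (hS : S.Nonempty) :
    S.card ∣ n.factorial :=
  Nat.dvd_factorial (card_pos.mpr hS) (le_trans (card_le_card (subset_univ S)) (by simp))

lemma map_FF {p n : ℕ} {R R' : Type*} [CommRing R] [CommRing R'] (g : R →+* R') :
    MvPolynomial.map g (FF p n R) = FF p n R' := by
  simp [FF, map_sum, map_mul, map_pow, map_prod]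

lemma FF_isHomogeneous (p n : ℕ) [Fact p.Prime] (R : Type*) [CommRing R] :
    (FF p n R).IsHomogeneous ((p - 1) * n.factorial) := by
  apply IsHomogeneous.sum
  intro S hS
  simp only [mem_filter] at hS
  have h1 : ((-1 : MvPolynomial (Fin n) R) ^ (S.card + 1)).IsHomogeneous 0 := by
    simpa using (isHomogeneous_C (Fin n) (-1 : R)).pow (S.card + 1)
  have h2 : (∏ i ∈ S, X i ^ eS p n S).IsHomogeneous (∑ _i ∈ S, eS p n S) :=
    IsHomogeneous.prod _ _ _ fun i _ => by simpa using (isHomogeneous_X R i).pow (eS p n S)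
  have := h1.mul h2
  rw [zero_add, Finset.sum_const, smul_eq_mul] at this
  convert this using 1
  rw [eS, mul_left_comm, Nat.mul_div_cancel' (card_dvd_factorial hS.2)]

lemma eval_FF_zero (p n : ℕ) [Fact p.Prime] (R : Type*) [CommRing R] :
    MvPolynomial.eval (0 : Fin n → R) (FF p n R) = 0 := by
  rw [FF, map_sum]
  apply Finset.sum_eq_zero
  intro S hS
  simp only [mem_filter] at hS
  rw [map_mul, map_prod]
  obtain ⟨i, hi⟩ := hS.2
  rw [Finset.prod_eq_zero hi, mul_zero]
  simp [zero_pow (eS_ne_zero hS.2)]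

/-- the key evaluation: on a stratum with nonempty support the value is 1. -/
lemma eval_FF_one (p n : ℕ) [Fact p.Prime] (I : Finset (Fin n)) (hI : I.Nonempty)
    (x : Fin n → ZMod p) (hx : ∀ i, x i ≠ 0 ↔ i ∈ I) :
    MvPolynomial.eval x (FF p n (ZMod p)) = 1 := by
  rw [FF, map_sum]
  have hterm : ∀ S ∈ Finset.univ.powerset.filter Finset.Nonempty,
      MvPolynomial.eval x ((-1) ^ (S.card + 1) * ∏ i ∈ S, X i ^ eS p n S)
        = if S ⊆ I then (-1 : ZMod p) ^ (S.card + 1) else 0 := by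
    intro S hS
    simp only [mem_filter] at hS
    rw [map_mul, map_prod]
    by_cases h : S ⊆ I
    · have : ∀ i ∈ S, MvPolynomial.eval x (X i ^ eS p n S) = 1 := by
        intro i hi
        have hxi : x i ≠ 0 := (hx i).mpr (h hi)
        rw [map_pow, eval_X, eS, pow_mul, ZMod.pow_card_sub_one_eq_one hxi, one_pow]
      rw [Finset.prod_congr rfl this, Finset.prod_const_one, mul_one, if_pos h]
      simp
    · obtain ⟨i, hiS, hiI⟩ := Finset.not_subset.mp h
      have hxi : x i = 0 := by
        by_contra hne; exact hiI ((hx i).mp hne)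
      rw [Finset.prod_eq_zero hiS, mul_zero, if_neg h]
      rw [map_pow, eval_X, hxi, zero_pow (eS_ne_zero hS.2)]
  rw [Finset.sum_congr rfl hterm, Finset.sum_ite, Finset.sum_const_zero, add_zero]
  have hset : (Finset.univ.powerset.filter Finset.Nonempty).filter (· ⊆ I)
      = I.powerset.filter Finset.Nonempty := by
    ext S
    simp [Finset.mem_filter, Finset.mem_powerset, and_comm]
  rw [hset]
  -- compute the alternating sum over nonempty subsets of I, in ℤ first
  have hz : (∑ S ∈ I.powerset.filter Finset.Nonempty, (-1 : ℤ) ^ (S.card + 1)) = 1 := by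
    have h0 : (∑ S ∈ I.powerset, (-1 : ℤ) ^ S.card) = 0 :=
      Finset.sum_powerset_neg_one_pow_card_of_nonempty hI
    have hsplit : I.powerset = insert (∅ : Finset (Fin n)) (I.powerset.filter Finset.Nonempty) := by
      ext S
      simp only [Finset.mem_insert, Finset.mem_powerset, Finset.mem_filter,
        Finset.nonempty_iff_ne_empty]
      constructor
      · intro h
        by_cases hS : S = ∅
        · exact Or.inl hS
        · exact Or.inr ⟨h, hS⟩
      · rintro (rfl | ⟨h, _⟩)
        · exact Finset.empty_subset I
        · exact h
    rw [hsplit, Finset.sum_insert (by simp [Finset.nonempty_iff_ne_empty])] at h0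
    simp only [card_empty, pow_zero] at h0
    have : (∑ S ∈ I.powerset.filter Finset.Nonempty, (-1 : ℤ) ^ S.card) = -1 := by linarith
    calc (∑ S ∈ I.powerset.filter Finset.Nonempty, (-1 : ℤ) ^ (S.card + 1))
        = ∑ S ∈ I.powerset.filter Finset.Nonempty, (-1) * (-1 : ℤ) ^ S.card := by
          apply Finset.sum_congr rfl; intro S _; ring
      _ = 1 := by rw [← Finset.mul_sum, this]; ring
  calc (∑ S ∈ I.powerset.filter Finset.Nonempty, (-1 : ZMod p) ^ (S.card + 1))
      = ((∑ S ∈ I.powerset.filter Finset.Nonempty, (-1 : ℤ) ^ (S.card + 1) : ℤ) : ZMod p) := by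
        push_cast; rfl
    _ = 1 := by rw [hz]; norm_num



/-- Reduction modulo `p` of a polynomial with coefficients in `ℤ_p`. -/
def modP (n : ℕ) (f : MvPolynomial (Fin n) ℤ_[p]) : MvPolynomial (Fin n) (ZMod p) :=
  MvPolynomial.map (PadicInt.toZMod) f

/-- `f` is strongly elliptic modulo `p`: for every nonempty `I ⊆ {1,…,n}`, the reduction of `f`
modulo `p` has no zeros on the stratum `{x ∈ 𝔽_p^n : x i ≠ 0 ↔ i ∈ I}`. -/
def StronglyElliptic (n : ℕ) (f : MvPolynomial (Fin n) ℤ_[p]) : Prop :=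
  ∀ I : Finset (Fin n), I.Nonempty →
    ∀ x : Fin n → ZMod p, (∀ i, x i ≠ 0 ↔ i ∈ I) →
      MvPolynomial.eval x (modP p n f) ≠ 0

theorem statement16 (p : ℕ) [Fact p.Prime] (n : ℕ) (hn : 0 < n) :
    {f : MvPolynomial (Fin n) ℤ_[p] |
      f ≠ 0 ∧ (∃ d : ℕ, 0 < d ∧ f.IsHomogeneous d) ∧
      MvPolynomial.eval (0 : Fin n → ℤ_[p]) f = 0 ∧
      StronglyElliptic p n f}.Infinite := by
  have hp : 2 ≤ p := (Fact.out : p.Prime).two_le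
  set D : ℕ := (p - 1) * n.factorial with hDdef
  have hD : 0 < D := by
    have := Nat.factorial_pos n
    have : 0 < p - 1 := by omega
    positivity
  set f : MvPolynomial (Fin n) ℤ_[p] := FF p n ℤ_[p] with hfdef
  have hmod : ∀ m : ℕ, modP p n (f ^ m) = (FF p n (ZMod p)) ^ m := by
    intro m
    rw [modP, map_pow, hfdef, map_FF]
  have : Nonempty (Fin n) := ⟨⟨0, hn⟩⟩
  have hf0 : f ≠ 0 := by
    intro h
    have h1 : MvPolynomial.eval (fun _ => (1 : ZMod p)) (modP p n f) = 1 := by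
      rw [modP, hfdef, map_FF]
      exact eval_FF_one p n Finset.univ Finset.univ_nonempty _
        (fun i => by simp [one_ne_zero])
    rw [h] at h1
    simp [modP] at h1
  apply Set.infinite_of_injective_forall_mem (f := fun m : ℕ => f ^ (m + 1))
  · intro a b hab
    simp only at hab
    have h1 := (FF_isHomogeneous p n ℤ_[p]).pow (a + 1)
    have h2 := (FF_isHomogeneous p n ℤ_[p]).pow (b + 1)
    rw [← hfdef] at h1 h2
    rw [hab] at h1
    have := h1.inj_right h2 (pow_ne_zero _ hf0)
    have := Nat.eq_of_mul_eq_mul_left hD this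
    omega
  · intro m
    refine ⟨pow_ne_zero _ hf0, ⟨D * (m + 1), by positivity, ?_⟩, ?_, ?_⟩
    · exact (hfdef ▸ FF_isHomogeneous p n ℤ_[p]).pow (m + 1)
    · rw [map_pow, hfdef, eval_FF_zero, zero_pow (by omega)]
    · intro I hI x hx
      rw [hmod, map_pow, eval_FF_one p n I hI x hx, one_pow]
      exact one_ne_zero

end PadicHeat
end
end

section
/- Let f ∈ Z_p[x₁,…,x_n] be a nonconstant homogeneous polynomial of degree d with f(0)=0 and coefficients in Z_p^×. If f is strongly elliptic modulo p, then |f(x)|_p = ‖x‖_p^d for all x ∈ Q_p^n. -/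
noncomputable section

namespace PadicHeat

variable (p : ℕ) [Fact p.Prime]

private lemma eval_mul_smul {n d : ℕ} {R : Type*} [CommRing R] {f : MvPolynomial (Fin n) R}
    (hf : f.IsHomogeneous d) (c : R) (x : Fin n → R) :
    MvPolynomial.eval (fun i => c * x i) f = c ^ d * MvPolynomial.eval x f := by
  rw [MvPolynomial.eval_eq, MvPolynomial.eval_eq, Finset.mul_sum]
  refine Finset.sum_congr rfl fun m hm => ?_
  have hdeg := hf (MvPolynomial.mem_support_iff.mp hm)
  simp only [mul_pow, Finset.prod_mul_distrib, Finset.prod_pow_eq_pow_sum]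
  have : ∑ i ∈ m.support, m i = d := by
    simpa [Finsupp.weight_apply, Finsupp.sum] using hdeg
  rw [this]; ring

private lemma eval_map_comm {σ R S : Type*} [CommRing R] [CommRing S] (φ : R →+* S)
    (z : σ → R) (f : MvPolynomial σ R) :
    MvPolynomial.eval (fun i => φ (z i)) (MvPolynomial.map φ f) = φ (MvPolynomial.eval z f) := by
  rw [MvPolynomial.eval_map]
  exact (MvPolynomial.eval₂_comp_left φ (RingHom.id R) z f).symm.trans (by simp)

private lemma toZMod_ne_zero_iff (a : ℤ_[p]) : PadicInt.toZMod a ≠ 0 ↔ ‖a‖ = 1 := by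
  rw [Ne, ← RingHom.mem_ker, PadicInt.ker_toZMod, PadicInt.maximalIdeal_eq_span_p,
    Ideal.mem_span_singleton, ← PadicInt.norm_lt_one_iff_dvd]
  constructor
  · intro h
    exact le_antisymm (PadicInt.norm_le_one a) (not_lt.mp h)
  · intro h
    rw [h]; exact lt_irrefl 1

theorem statement17 (p : ℕ) [Fact p.Prime] (n : ℕ) (hn : 0 < n)
    (f : MvPolynomial (Fin n) ℤ_[p]) (d : ℕ) (hd : 0 < d) (hf0 : f ≠ 0)
    (hhom : f.IsHomogeneous d)
    (heval0 : MvPolynomial.eval (0 : Fin n → ℤ_[p]) f = 0)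
    (hunit : ∀ m ∈ f.support, IsUnit (f.coeff m))
    (hse : StronglyElliptic p n f) :
    ∀ x : Fin n → ℚ_[p],
      ‖MvPolynomial.eval x (MvPolynomial.map (PadicInt.Coe.ringHom) f)‖ = ‖x‖ ^ d := by
  intro x
  by_cases hx : x = 0
  · subst hx
    have h0 : MvPolynomial.eval (0 : Fin n → ℚ_[p])
        (MvPolynomial.map (PadicInt.Coe.ringHom) f) = 0 := by
      rw [show (0 : Fin n → ℚ_[p]) = fun i => PadicInt.Coe.ringHom ((0 : Fin n → ℤ_[p]) i) by
          funext i; simp,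
        eval_map_comm, heval0, map_zero]
    rw [h0, norm_zero, norm_zero, zero_pow hd.ne']
  · -- pick index achieving the sup norm
    haveI : Nonempty (Fin n) := ⟨⟨0, hn⟩⟩
    obtain ⟨i0, -, hsup⟩ := Finset.exists_mem_eq_sup (Finset.univ : Finset (Fin n))
      Finset.univ_nonempty (fun i => ‖x i‖₊)
    have hnorm : ‖x‖ = ‖x i0‖ := by
      rw [Pi.norm_def, hsup]; rfl
    have hxpos : 0 < ‖x‖ := norm_pos_iff.mpr hx
    set t : ℚ_[p] := x i0 with ht
    have htne : t ≠ 0 := by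
      intro h
      exact hxpos.ne' (hnorm.trans (by rw [h, norm_zero]))
    have hle : ∀ i, ‖x i / t‖ ≤ 1 := by
      intro i
      rw [norm_div, div_le_one (hnorm ▸ hxpos)]
      exact (norm_le_pi_norm x i).trans hnorm.le
    set z : Fin n → ℤ_[p] := fun i => ⟨x i / t, hle i⟩ with hz
    have hxz : ∀ i, x i = t * ((z i : ℚ_[p])) := by
      intro i
      simp only [hz]
      field_simp
    have hz0 : (z i0 : ℚ_[p]) = 1 := by
      simp only [hz]
      exact div_self htne
    -- reduce mod p and use strong ellipticity
    have hzbar : PadicInt.toZMod (MvPolynomial.eval z f) ≠ 0 := by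
      have key : PadicInt.toZMod (MvPolynomial.eval z f)
          = MvPolynomial.eval (fun i => PadicInt.toZMod (z i)) (modP p n f) :=
        (eval_map_comm _ z f).symm
      rw [key]
      classical
      refine hse (Finset.univ.filter (fun i => PadicInt.toZMod (z i) ≠ 0)) ?_
        (fun i => PadicInt.toZMod (z i)) (fun i => by simp)
      refine ⟨i0, ?_⟩
      simp only [Finset.mem_filter, Finset.mem_univ, true_and]
      rw [toZMod_ne_zero_iff]
      rw [PadicInt.norm_def, hz0, norm_one]
    have hzeval : ‖(MvPolynomial.eval z f : ℤ_[p])‖ = 1 := (toZMod_ne_zero_iff p _).mp hzbar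
    have hxeq : x = fun i => t * ((z i : ℚ_[p])) := funext hxz
    have hFhom : (MvPolynomial.map (PadicInt.Coe.ringHom) f).IsHomogeneous d := hhom.map _
    have lhs : MvPolynomial.eval x (MvPolynomial.map (PadicInt.Coe.ringHom) f)
        = t ^ d * (PadicInt.Coe.ringHom (MvPolynomial.eval z f) : ℚ_[p]) := by
      rw [hxeq, eval_mul_smul hFhom t (fun i => (z i : ℚ_[p])),
        show (fun i => ((z i : ℚ_[p]))) = fun i => PadicInt.Coe.ringHom (z i) from rfl,
        eval_map_comm (PadicInt.Coe.ringHom (p := p)) z f]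
    have hone : ‖(PadicInt.Coe.ringHom (MvPolynomial.eval z f) : ℚ_[p])‖ = 1 := by
      rw [show (PadicInt.Coe.ringHom (MvPolynomial.eval z f) : ℚ_[p])
        = ((MvPolynomial.eval z f : ℤ_[p]) : ℚ_[p]) from rfl, ← PadicInt.norm_def, hzeval]
    rw [lhs, norm_mul, norm_pow, hone, mul_one, hnorm]
end PadicHeat
end
end
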